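/- (Theorem 1) Let M be a nonempty finite set and let p be a probability mass function on M × M with p(m,l) > 0 for all (m,l), whose second marginal is uniform, i.e. p₂(l) = 1/|M| for every l ∈ M. Then the infimum over all critics g : M × M → ℝ of the expected softmax cross-entropy loss equals the mutual information up to the constant log |M|: ⨅_{g : M×M→ℝ} L_CE(g) = log |M| − I(p). -/

import Mathlib

/-- **Theorem 1.** For a strictly positive pmf `p` on `M × M` with uniform
second marginal, the infimum over all critics `g : M × M → ℝ` of the expected softmax
cross-entropy loss equals `log |M| − I(p)`. -/
theorem iInf_softmax_crossEntropy_eq_log_card_sub_mutualInfo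
    {M : Type*} [Fintype M] [Nonempty M]
    (p : M × M → ℝ)
    (hppos : ∀ x, 0 < p x)
    (hp1 : ∑ x : M × M, p x = 1)
    (hunif : ∀ l : M, ∑ m : M, p (m, l) = 1 / (Fintype.card M : ℝ)) :
    (⨅ g : M × M → ℝ,
        -(∑ x : M × M, p x * (g x - Real.log (∑ l' : M, Real.exp (g (x.1, l'))))))
      = Real.log (Fintype.card M)
        - ∑ x ∈ Finset.univ.filter (fun x : M × M => 0 < p x),
            p x * Real.log (p x /
              ((∑ b : M, p (x.1, b)) * (∑ a : M, p (a, x.2)))) := by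
  classical
  have hNpos : (0:ℝ) < (Fintype.card M : ℝ) := by
    exact_mod_cast Fintype.card_pos
  set p1 : M → ℝ := fun m => ∑ l, p (m, l) with hp1def
  have hp1pos : ∀ m, 0 < p1 m := fun m =>
    Finset.sum_pos (fun l _ => hppos _) ⟨Classical.arbitrary M, Finset.mem_univ _⟩
  have hp1sum : ∑ m, p1 m = 1 := by
    rw [← hp1, Fintype.sum_prod_type]
  set c : ℝ := -(∑ x : M × M, p x * Real.log (p x / p1 x.1)) with hc
  -- lower bound
  have hlb : ∀ g : M × M → ℝ,
      c ≤ -(∑ x : M × M, p x * (g x - Real.log (∑ l' : M, Real.exp (g (x.1, l'))))) := by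
    intro g
    rw [hc, neg_le_neg_iff]
    set Z : M → ℝ := fun m => ∑ l', Real.exp (g (m, l')) with hZdef
    have hZpos : ∀ m, 0 < Z m := fun m =>
      Finset.sum_pos (fun l _ => Real.exp_pos _) ⟨Classical.arbitrary M, Finset.mem_univ _⟩
    have key : ∀ x : M × M,
        p x * (g x - Real.log (Z x.1)) - p x * Real.log (p x / p1 x.1)
          ≤ Real.exp (g x) * p1 x.1 / Z x.1 - p x := by
      intro x
      have ht : 0 < Real.exp (g x) * p1 x.1 / (Z x.1 * p x) := by
        have := hZpos x.1; have := hp1pos x.1; have := hppos x; positivity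
      have hlog := Real.log_le_sub_one_of_pos ht
      have hle : p x * Real.log (Real.exp (g x) * p1 x.1 / (Z x.1 * p x))
          ≤ p x * (Real.exp (g x) * p1 x.1 / (Z x.1 * p x) - 1) :=
        mul_le_mul_of_nonneg_left hlog (hppos x).le
      have hrw : Real.log (Real.exp (g x) * p1 x.1 / (Z x.1 * p x))
          = (g x - Real.log (Z x.1)) - Real.log (p x / p1 x.1) := by
        rw [Real.log_div (mul_pos (Real.exp_pos _) (hp1pos x.1)).ne' (mul_pos (hZpos x.1) (hppos x)).ne',
          Real.log_mul (Real.exp_ne_zero _) (hp1pos x.1).ne',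
          Real.log_mul (hZpos x.1).ne' (hppos x).ne',
          Real.log_div (hppos x).ne' (hp1pos x.1).ne', Real.log_exp]
        ring
      have hrw2 : p x * (Real.exp (g x) * p1 x.1 / (Z x.1 * p x) - 1)
          = Real.exp (g x) * p1 x.1 / Z x.1 - p x := by
        field_simp [(hppos x).ne', (hZpos x.1).ne']
      calc p x * (g x - Real.log (Z x.1)) - p x * Real.log (p x / p1 x.1)
          = p x * Real.log (Real.exp (g x) * p1 x.1 / (Z x.1 * p x)) := by rw [hrw]; ring
        _ ≤ p x * (Real.exp (g x) * p1 x.1 / (Z x.1 * p x) - 1) := hle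
        _ = Real.exp (g x) * p1 x.1 / Z x.1 - p x := hrw2
    have hsum : ∑ x : M × M, (Real.exp (g x) * p1 x.1 / Z x.1 - p x) = 0 := by
      rw [Finset.sum_sub_distrib, hp1]
      have : ∑ x : M × M, Real.exp (g x) * p1 x.1 / Z x.1 = 1 := by
        rw [Fintype.sum_prod_type]
        have : ∀ m : M, ∑ l : M, Real.exp (g (m, l)) * p1 m / Z m = p1 m := by
          intro m
          rw [← Finset.sum_div, ← Finset.sum_mul]
          rw [show (∑ l : M, Real.exp (g (m, l))) = Z m from rfl]
          exact mul_div_cancel_left₀ _ (hZpos m).ne'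
        simp_rw [this]
        exact hp1sum
      rw [this]; ring
    have := Finset.sum_le_sum (fun x (_ : x ∈ Finset.univ) => key x)
    rw [Finset.sum_sub_distrib, hsum] at this
    linarith
  -- value at the optimal critic
  have hval : -(∑ x : M × M, p x * ((fun x : M × M => Real.log (p x)) x
      - Real.log (∑ l' : M, Real.exp ((fun x : M × M => Real.log (p x)) (x.1, l'))))) = c := by
    rw [hc]
    congr 1
    apply Finset.sum_congr rfl
    intro x _
    have hZ : (∑ l' : M, Real.exp (Real.log (p (x.1, l')))) = p1 x.1 := by
      apply Finset.sum_congr rfl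
      intro l _
      exact Real.exp_log (hppos _)
    rw [hZ, Real.log_div (hppos x).ne' (hp1pos x.1).ne']
  have hinf : (⨅ g : M × M → ℝ,
      -(∑ x : M × M, p x * (g x - Real.log (∑ l' : M, Real.exp (g (x.1, l')))))) = c := by
    apply le_antisymm
    · calc (⨅ g : M × M → ℝ, -(∑ x : M × M, p x * (g x - Real.log (∑ l' : M, Real.exp (g (x.1, l'))))))
          ≤ -(∑ x : M × M, p x * ((fun x : M × M => Real.log (p x)) x
              - Real.log (∑ l' : M, Real.exp ((fun x : M × M => Real.log (p x)) (x.1, l'))))) := by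
            apply ciInf_le
            exact ⟨c, by rintro y ⟨g, rfl⟩; exact hlb g⟩
        _ = c := hval
    · exact le_ciInf hlb
  rw [hinf]
  -- compute the right-hand side
  rw [Finset.filter_true_of_mem (fun x _ => hppos x)]
  have hterm : ∀ x : M × M,
      p x * Real.log (p x / ((∑ b : M, p (x.1, b)) * (∑ a : M, p (a, x.2))))
        = p x * Real.log (p x / p1 x.1) + p x * Real.log (Fintype.card M) := by
    intro x
    have h2 : (∑ a : M, p (a, x.2)) = 1 / (Fintype.card M : ℝ) := hunif x.2
    rw [h2]
    rw [Real.log_div (hppos x).ne' (mul_ne_zero (hp1pos x.1).ne' (one_div_ne_zero hNpos.ne')),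
      Real.log_mul (hp1pos x.1).ne' (one_div_ne_zero hNpos.ne'),
      Real.log_div one_ne_zero hNpos.ne', Real.log_one,
      Real.log_div (hppos x).ne' (hp1pos x.1).ne']
    ring
  rw [Finset.sum_congr rfl (fun x _ => hterm x), Finset.sum_add_distrib,
    ← Finset.sum_mul, hp1, hc]
  ring
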